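/- Let n ≥ 1 and let F : ℝⁿ → ℝ satisfy (i) F(0) ≤ F(x) for all x, (ii) F(x) ≤ ‖x‖²/2 + F(0) for all x, and (iii) the map x ↦ ‖x‖²/2 − F(x) is convex. Then for all x, k ∈ ℝⁿ: if ‖k‖ ≤ ‖x‖ then F(x − k) − F(x) ≥ −‖k‖·‖x‖ + ‖k‖²/2, and if ‖k‖ ≥ ‖x‖ then F(x − k) − F(x) ≥ −‖x‖²/2. -/

import Mathlib

open RealInnerProductSpace

theorem stmt0 (n : ℕ) (hn : 1 ≤ n) (F : EuclideanSpace ℝ (Fin n) → ℝ)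
    (h1 : ∀ x, F 0 ≤ F x)
    (h2 : ∀ x, F x ≤ ‖x‖ ^ 2 / 2 + F 0)
    (h3 : ConvexOn ℝ Set.univ fun x => ‖x‖ ^ 2 / 2 - F x) :
    ∀ x k : EuclideanSpace ℝ (Fin n),
      (‖k‖ ≤ ‖x‖ → F (x - k) - F x ≥ -(‖k‖ * ‖x‖) + ‖k‖ ^ 2 / 2) ∧
      (‖x‖ ≤ ‖k‖ → F (x - k) - F x ≥ -(‖x‖ ^ 2) / 2) := by
  intro x k
  constructor
  · intro hkx
    rcases eq_or_ne k 0 with hk | hk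
    · simp [hk]
    have hknorm : (0:ℝ) < ‖k‖ := norm_pos_iff.mpr hk
    have hxnorm : (0:ℝ) < ‖x‖ := lt_of_lt_of_le hknorm hkx
    set t : ℝ := ‖k‖ / ‖x‖ with ht
    set s : ℝ := ‖x‖ / ‖k‖ with hs
    have ht0 : 0 < t := div_pos hknorm hxnorm
    have ht1 : t ≤ 1 := (div_le_one hxnorm).mpr hkx
    set z : EuclideanSpace ℝ (Fin n) := x - s • k with hz
    have hts : t * s = 1 := by rw [ht, hs, div_mul_div_comm, mul_comm ‖k‖, div_self (mul_pos hxnorm hknorm).ne']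
    have hcomb : (1 - t) • x + t • z = x - k := by
      rw [hz, smul_sub, smul_smul, hts, one_smul, sub_smul, one_smul]
      abel
    have hconv := h3.2 (Set.mem_univ x) (Set.mem_univ z) (show (0:ℝ) ≤ 1 - t by linarith) ht0.le (show 1 - t + t = 1 by ring)
    rw [hcomb] at hconv
    simp only at hconv
    have hxk : ‖x - k‖ ^ 2 = ‖x‖ ^ 2 - 2 * ⟪x, k⟫ + ‖k‖ ^ 2 := norm_sub_sq_real x k
    have hzz : ‖z‖ ^ 2 = ‖x‖ ^ 2 - 2 * (s * ⟪x, k⟫) + s ^ 2 * ‖k‖ ^ 2 := by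
      rw [hz, norm_sub_sq_real, real_inner_smul_right, norm_smul, Real.norm_eq_abs,
        abs_of_pos (div_pos hxnorm hknorm)]
      ring
    have hs2 : s ^ 2 * ‖k‖ ^ 2 = ‖x‖ ^ 2 := by
      rw [hs]; field_simp
    have htx : t * ‖x‖ ^ 2 = ‖k‖ * ‖x‖ := by
      rw [ht]; field_simp
    have htz : t * ‖z‖ ^ 2 = 2 * (‖k‖ * ‖x‖) - 2 * ⟪x, k⟫ := by
      rw [hzz, hs2, ht, hs]; field_simp; ring
    have hGx : -(F 0) ≤ ‖x‖ ^ 2 / 2 - F x := by have := h2 x; linarith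
    have hGz : ‖z‖ ^ 2 / 2 - F z ≤ ‖z‖ ^ 2 / 2 - F 0 := by have := h1 z; linarith
    have h4 : t * (‖z‖ ^ 2 / 2 - F z) ≤ t * (‖z‖ ^ 2 / 2 - F 0) :=
      mul_le_mul_of_nonneg_left hGz ht0.le
    have h5 : t * (-(F 0)) ≤ t * (‖x‖ ^ 2 / 2 - F x) :=
      mul_le_mul_of_nonneg_left hGx ht0.le
    clear_value t s z
    clear ht hs hz hts hzz hs2 hcomb
    simp only [smul_eq_mul] at hconv
    ring_nf at hconv h4 h5 ⊢
    nlinarith [hconv, hxk, htz, htx, h4, h5]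
  · intro hxk
    have := h1 (x - k)
    have := h2 x
    linarith
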